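/- Constant-depth lower bound on trace distance: let ρ = U|0ⁿ⟩⟨0ⁿ|U† and σ = V|0ⁿ⟩⟨0ⁿ|V† with U, V of depth at most k (k constant), and O = (1/n)∑ᵢ Zᵢ. If |tr(Oρ) − tr(Oσ)| > ε, then (1/2)‖ρ − σ‖₁ ≥ 1 − C_k/(n ε²) for a constant C_k depending only on k. -/

import Mathlib

open scoped Matrix ComplexOrder

/-- Operators on `n` qubits, as matrices indexed by computational basis states. -/
abbrev QOp (n : ℕ) := Matrix (Fin n → Fin 2) (Fin n → Fin 2) ℂ

/-- `A` acts non-trivially only on the qubits in `S`, i.e. `A = A_S ⊗ I` on the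
complement of `S`. -/
def SupportedOn {n : ℕ} (A : QOp n) (S : Finset (Fin n)) : Prop :=
  ∃ f : (S → Fin 2) → (S → Fin 2) → ℂ,
    ∀ x y, A x y = f (fun i => x i.1) (fun i => y i.1) *
      (if ∀ i, i ∉ S → x i = y i then 1 else 0)

/-- `U` is a single layer of two-qubit gates: a product of unitaries acting on
pairwise disjoint sets of at most two qubits, recorded in the list `gates`. -/
def IsLayer {n : ℕ} (U : QOp n) (gates : List (QOp n × Finset (Fin n))) : Prop :=
  U = (gates.map Prod.fst).prod ∧
  (∀ g ∈ gates, g.1 ∈ Matrix.unitaryGroup (Fin n → Fin 2) ℂ ∧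
      SupportedOn g.1 g.2 ∧ g.2.card ≤ 2) ∧
  gates.Pairwise (fun g h => Disjoint g.2 h.2)

/-- `U` is a depth-`k` quantum circuit: a product of `k` layers of two-qubit gates. -/
def HasDepth {n : ℕ} (U : QOp n) (k : ℕ) : Prop :=
  ∃ layers : Fin k → QOp n, U = (List.ofFn layers).prod ∧
    ∀ j, ∃ gates, IsLayer (layers j) gates

/-- Trace norm of a complex matrix: the trace of `√(AᴴA)` (the sum of singular values). -/
noncomputable def traceNorm {d : Type*} [Fintype d] [DecidableEq d] (A : Matrix d d ℂ) : ℝ :=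
  (((Matrix.posSemidef_conjTranspose_mul_self A).1.eigenvectorUnitary.1 *
    Matrix.diagonal (((↑) : ℝ → ℂ) ∘ (√·) ∘ (Matrix.posSemidef_conjTranspose_mul_self A).1.eigenvalues) *
    (star (Matrix.posSemidef_conjTranspose_mul_self A).1.eigenvectorUnitary : Matrix d d ℂ)).trace).re

/-- The Pauli `Z` operator on qubit `i` (tensored with identity elsewhere). -/
def Zmat (n : ℕ) (i : Fin n) : Matrix (Fin n → Fin 2) (Fin n → Fin 2) ℂ :=
  Matrix.of fun b c => if b = c then (if b i = 0 then 1 else -1) else 0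

lemma conj_diag_apply {d : Type*} [Fintype d] [DecidableEq d] (W : Matrix d d ℂ)
    (f : d → ℂ) (x y : d) :
    (W * Matrix.diagonal f * star W) x y = ∑ i, W x i * f i * (starRingEnd ℂ) (W y i) := by
  rw [Matrix.star_eq_conjTranspose, Matrix.mul_apply]
  refine Finset.sum_congr rfl fun i _ => ?_
  rw [Matrix.mul_diagonal, Matrix.conjTranspose_apply, RCLike.star_def]

lemma sum_mul_diag_le_traceNorm {d : Type*} [Fintype d] [DecidableEq d]
    {A : Matrix d d ℂ} (hA : A.IsHermitian) (s : d → ℝ) (hs : ∀ x, |s x| ≤ 1) :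
    ∑ x, s x * (A x x).re ≤ traceNorm A := by
  set W : Matrix d d ℂ := (hA.eigenvectorUnitary : Matrix d d ℂ) with hW
  set e : d → ℝ := hA.eigenvalues with he
  have hWsW : star W * W = 1 := Unitary.coe_star_mul_self hA.eigenvectorUnitary
  have hWWs : W * star W = 1 := Unitary.coe_mul_star_self hA.eigenvectorUnitary
  have hspec : A = W * Matrix.diagonal (fun i => (e i : ℂ)) * star W := by
    exact hA.spectral_theorem
  set B : Matrix d d ℂ := W * Matrix.diagonal (fun i => ((|e i| : ℝ) : ℂ)) * star W with hB
  have hBpsd : B.PosSemidef := by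
    rw [hB, Matrix.star_eq_conjTranspose]
    exact Matrix.PosSemidef.mul_mul_conjTranspose_same
      (Matrix.posSemidef_diagonal_iff.mpr fun i => by
        rw [Complex.zero_le_real]; exact abs_nonneg _) W
  have hBsq : B ^ 2 = Aᴴ * A := by
    have : Aᴴ = A := hA.eq
    rw [this, hspec, hB, pow_two]
    calc (W * Matrix.diagonal (fun i => ((|e i| : ℝ) : ℂ)) * star W) *
          (W * Matrix.diagonal (fun i => ((|e i| : ℝ) : ℂ)) * star W)
        = W * (Matrix.diagonal (fun i => ((|e i| : ℝ) : ℂ)) * (star W * W) *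
            Matrix.diagonal (fun i => ((|e i| : ℝ) : ℂ))) * star W := by
          simp only [Matrix.mul_assoc]
      _ = W * (Matrix.diagonal (fun i => (e i : ℂ)) * (star W * W) *
            Matrix.diagonal (fun i => (e i : ℂ))) * star W := by
          rw [hWsW]
          simp only [Matrix.mul_one, Matrix.diagonal_mul_diagonal]
          have habs : (fun i => ((|e i| : ℝ) : ℂ) * ((|e i| : ℝ) : ℂ))
              = fun i => ((e i : ℝ) : ℂ) * ((e i : ℝ) : ℂ) := by
            funext i
            rw [← Complex.ofReal_mul, ← Complex.ofReal_mul, abs_mul_abs_self]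
          rw [habs]
      _ = (W * Matrix.diagonal (fun i => (e i : ℂ)) * star W) *
          (W * Matrix.diagonal (fun i => (e i : ℂ)) * star W) := by
          simp only [Matrix.mul_assoc]
  have hsqrt : B = cfc Real.sqrt (Aᴴ * A) := by
    have hsa : IsSelfAdjoint A := hA
    have h2 : Aᴴ * A = cfc (fun x : ℝ => x ^ 2) A := by
      rw [cfc_pow_id A 2 hsa, hA.eq, pow_two]
    rw [h2, ← cfc_comp Real.sqrt (fun x : ℝ => x ^ 2) A hsa]
    have h3 : cfc (Real.sqrt ∘ fun x : ℝ => x ^ 2) A = cfc (fun x : ℝ => |x|) A := by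
      congr 1; funext x; simp [Real.sqrt_sq_eq_abs]
    rw [h3, Matrix.IsHermitian.cfc_eq hA]
    rfl
  have htrace : traceNorm A = ∑ i, |e i| := by
    rw [show traceNorm A = (cfc Real.sqrt (Aᴴ * A)).trace.re by
      rw [traceNorm, (Matrix.posSemidef_conjTranspose_mul_self A).1.cfc_eq]; rfl, ← hsqrt, hB, Matrix.trace_mul_cycle, hWsW,
      Matrix.one_mul, Matrix.trace_diagonal]
    rw [Complex.re_sum]
    simp
  have hdiag : ∀ x, (A x x).re = ∑ i, e i * Complex.normSq (W x i) := by
    intro x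
    rw [hspec, conj_diag_apply]
    rw [Complex.re_sum]
    refine Finset.sum_congr rfl fun i _ => ?_
    have : W x i * (e i : ℂ) * (starRingEnd ℂ) (W x i)
        = ((e i * Complex.normSq (W x i) : ℝ) : ℂ) := by
      push_cast
      rw [← Complex.mul_conj]
      ring
    rw [this, Complex.ofReal_re]
  have hcol : ∀ i, ∑ x, Complex.normSq (W x i) = 1 := by
    intro i
    have h1 : (star W * W) i i = 1 := by rw [hWsW]; simp
    have : (star W * W) i i = ∑ x, (Complex.normSq (W x i) : ℂ) := by
      rw [Matrix.star_eq_conjTranspose, Matrix.mul_apply]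
      refine Finset.sum_congr rfl fun x _ => ?_
      rw [Matrix.conjTranspose_apply, RCLike.star_def, ← Complex.normSq_eq_conj_mul_self]
    rw [this] at h1
    have := congrArg Complex.re h1
    rw [Complex.re_sum] at this
    simpa using this
  calc ∑ x, s x * (A x x).re
      = ∑ i, e i * ∑ x, s x * Complex.normSq (W x i) := by
        simp_rw [hdiag, Finset.mul_sum]
        rw [Finset.sum_comm]
        refine Finset.sum_congr rfl fun i _ => Finset.sum_congr rfl fun x _ => by ring
    _ ≤ ∑ i, |e i| := by
        refine Finset.sum_le_sum fun i _ => ?_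
        have hci : |∑ x, s x * Complex.normSq (W x i)| ≤ 1 := by
          calc |∑ x, s x * Complex.normSq (W x i)|
              ≤ ∑ x, |s x * Complex.normSq (W x i)| := Finset.abs_sum_le_sum_abs _ _
            _ ≤ ∑ x, Complex.normSq (W x i) := by
                refine Finset.sum_le_sum fun x _ => ?_
                rw [abs_mul, abs_of_nonneg (Complex.normSq_nonneg _)]
                exact mul_le_of_le_one_left (Complex.normSq_nonneg _) (hs x)
            _ = 1 := hcol i
        calc e i * ∑ x, s x * Complex.normSq (W x i)
            ≤ |e i * ∑ x, s x * Complex.normSq (W x i)| := le_abs_self _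
          _ = |e i| * |∑ x, s x * Complex.normSq (W x i)| := abs_mul _ _
          _ ≤ |e i| * 1 := by
              exact mul_le_mul_of_nonneg_left hci (abs_nonneg _)
          _ = |e i| := mul_one _
    _ = traceNorm A := htrace.symm

namespace Aux
variable {n : ℕ}

/-- overwrite `x` on `S` by `u`. -/
def patch (S : Finset (Fin n)) (u : S → Fin 2) (x : Fin n → Fin 2) : Fin n → Fin 2 :=
  fun i => if h : i ∈ S then u ⟨i, h⟩ else x i

lemma patch_mem {S : Finset (Fin n)} (u : S → Fin 2) (x) {i : Fin n} (h : i ∈ S) :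
    patch S u x i = u ⟨i, h⟩ := by simp [patch, h]

lemma patch_not_mem {S : Finset (Fin n)} (u : S → Fin 2) (x) {i : Fin n} (h : i ∉ S) :
    patch S u x i = x i := by simp [patch, h]

lemma patch_restrict {S : Finset (Fin n)} (u : S → Fin 2) (x) :
    (fun i : S => patch S u x i.1) = u := by
  funext i; exact patch_mem u x i.2

lemma patch_self {S : Finset (Fin n)} (x : Fin n → Fin 2) :
    patch S (fun i : S => x i.1) x = x := by
  funext i; by_cases h : i ∈ S
  · rw [patch_mem _ _ h]
  · rw [patch_not_mem _ _ h]

/-- Collapsing a sum against the off-`S` delta. -/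
lemma sum_collapse (S : Finset (Fin n)) (G : (Fin n → Fin 2) → ℂ) (x : Fin n → Fin 2) :
    ∑ z, G z * (if ∀ i, i ∉ S → z i = x i then 1 else 0)
      = ∑ u : S → Fin 2, G (patch S u x) := by
  have : ∀ z : Fin n → Fin 2, G z * (if ∀ i, i ∉ S → z i = x i then 1 else 0)
      = if ∀ i, i ∉ S → z i = x i then G z else 0 := by
    intro z; split <;> simp
  simp_rw [this, ← Finset.sum_filter]
  refine Finset.sum_bij' (fun z _ => (fun i : S => z i.1)) (fun u _ => patch S u x)
    ?_ ?_ ?_ ?_ ?_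
  · intro a ha; exact Finset.mem_univ _
  · intro u hu
    simp only [Finset.mem_filter, Finset.mem_univ, true_and]
    intro i hi; exact patch_not_mem u x hi
  · intro z hz
    simp only [Finset.mem_filter, Finset.mem_univ, true_and] at hz
    funext i
    show patch S (fun j : S => z j.1) x i = z i
    by_cases h : i ∈ S
    · rw [patch_mem _ _ h]
    · rw [patch_not_mem _ _ h]; exact (hz i h).symm
  · intro u hu; exact patch_restrict u x
  · intro z hz
    simp only [Finset.mem_filter, Finset.mem_univ, true_and] at hz
    have hzz : patch S (fun j : S => z j.1) x = z := by
      funext i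
      by_cases h : i ∈ S
      · rw [patch_mem _ _ h]
      · rw [patch_not_mem _ _ h]; exact (hz i h).symm
    show G z = G (patch S (fun j : S => z j.1) x)
    rw [hzz]

lemma delta_comm {S : Finset (Fin n)} (x y : Fin n → Fin 2) :
    (if ∀ i, i ∉ S → x i = y i then (1:ℂ) else 0)
      = (if ∀ i, i ∉ S → y i = x i then 1 else 0) := by
  simp only [eq_comm]

lemma _root_.SupportedOn.mono {A : QOp n} {S T : Finset (Fin n)} (hST : S ⊆ T)
    (hA : SupportedOn A S) : SupportedOn A T := by
  obtain ⟨f, hf⟩ := hA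
  refine ⟨fun u v => f (fun i => u ⟨i.1, hST i.2⟩) (fun i => v ⟨i.1, hST i.2⟩) *
    (if ∀ i : T, i.1 ∉ S → u i = v i then 1 else 0), fun x y => ?_⟩
  rw [hf x y]
  have hsplit : (if ∀ i, i ∉ S → x i = y i then (1:ℂ) else 0)
      = (if ∀ i : T, i.1 ∉ S → x i.1 = y i.1 then 1 else 0)
        * (if ∀ i, i ∉ T → x i = y i then 1 else 0) := by
    have hiff : (∀ i, i ∉ S → x i = y i)
        ↔ (∀ i : T, i.1 ∉ S → x i.1 = y i.1) ∧ (∀ i, i ∉ T → x i = y i) := by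
      constructor
      · intro h; exact ⟨fun i hi => h i.1 hi, fun i hi => h i (fun hS => hi (hST hS))⟩
      · rintro ⟨h1, h2⟩ i hi
        by_cases hT : i ∈ T
        · exact h1 ⟨i, hT⟩ hi
        · exact h2 i hT
    by_cases h1 : ∀ i : T, i.1 ∉ S → x i.1 = y i.1 <;>
      by_cases h2 : ∀ i, i ∉ T → x i = y i
    · rw [if_pos (hiff.mpr ⟨h1, h2⟩), if_pos h1, if_pos h2]; ring
    · rw [if_neg (fun hP => h2 (hiff.mp hP).2), if_pos h1, if_neg h2]; ring
    · rw [if_neg (fun hP => h1 (hiff.mp hP).1), if_neg h1, if_pos h2]; ring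
    · rw [if_neg (fun hP => h1 (hiff.mp hP).1), if_neg h1, if_neg h2]; ring
  rw [hsplit]; ring

lemma _root_.SupportedOn.conjTranspose {A : QOp n} {S : Finset (Fin n)}
    (hA : SupportedOn A S) : SupportedOn Aᴴ S := by
  obtain ⟨f, hf⟩ := hA
  refine ⟨fun u v => (starRingEnd ℂ) (f v u), fun x y => ?_⟩
  rw [Matrix.conjTranspose_apply, hf y x, RCLike.star_def, map_mul]
  rw [delta_comm]
  congr 1
  by_cases h : ∀ i, i ∉ S → x i = y i <;> simp [h]

lemma _root_.SupportedOn.mul {A B : QOp n} {S : Finset (Fin n)}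
    (hA : SupportedOn A S) (hB : SupportedOn B S) : SupportedOn (A * B) S := by
  obtain ⟨f, hf⟩ := hA
  obtain ⟨g, hg⟩ := hB
  refine ⟨fun u v => ∑ w : S → Fin 2, f u w * g w v, fun x y => ?_⟩
  rw [Matrix.mul_apply]
  have step : ∀ z, A x z * B z y
      = (f (fun i => x i.1) (fun i => z i.1) * g (fun i => z i.1) (fun i => y i.1)
          * (if ∀ i, i ∉ S → z i = y i then 1 else 0))
        * (if ∀ i, i ∉ S → z i = x i then 1 else 0) := by
    intro z
    rw [hf x z, hg z y, delta_comm x z]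
    ring
  simp_rw [step]
  rw [sum_collapse S (fun z => f (fun i => x i.1) (fun i => z i.1)
      * g (fun i => z i.1) (fun i => y i.1) * (if ∀ i, i ∉ S → z i = y i then 1 else 0)) x]
  have hrw : ∀ u : S → Fin 2,
      f (fun i => x i.1) (fun i => patch S u x i.1)
        * g (fun i => patch S u x i.1) (fun i => y i.1)
        * (if ∀ i, i ∉ S → patch S u x i = y i then 1 else 0)
      = f (fun i => x i.1) u * g u (fun i => y i.1)
        * (if ∀ i, i ∉ S → x i = y i then 1 else 0) := by
    intro u
    rw [patch_restrict]
    congr 1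
    refine if_congr ?_ rfl rfl
    constructor
    · intro h i hi; rw [← h i hi, patch_not_mem _ _ hi]
    · intro h i hi; rw [patch_not_mem _ _ hi]; exact h i hi
  simp_rw [hrw]
  rw [← Finset.sum_mul]

/-- entries of a product of operators with disjoint supports. -/
lemma mul_entry_disjoint {A B : QOp n} {S T : Finset (Fin n)}
    (f : (S → Fin 2) → (S → Fin 2) → ℂ) (g : (T → Fin 2) → (T → Fin 2) → ℂ)
    (hf : ∀ x y, A x y = f (fun i => x i.1) (fun i => y i.1) *
      (if ∀ i, i ∉ S → x i = y i then 1 else 0))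
    (hg : ∀ x y, B x y = g (fun i => x i.1) (fun i => y i.1) *
      (if ∀ i, i ∉ T → x i = y i then 1 else 0))
    (hd : Disjoint S T) (x y : Fin n → Fin 2) :
    (A * B) x y = f (fun i => x i.1) (fun i => y i.1) * g (fun i => x i.1) (fun i => y i.1)
      * (if ∀ i, i ∉ S ∪ T → x i = y i then 1 else 0) := by
  rw [Matrix.mul_apply]
  have step : ∀ z, A x z * B z y
      = (f (fun i => x i.1) (fun i => z i.1) * (g (fun i => z i.1) (fun i => y i.1)
          * (if ∀ i, i ∉ T → z i = y i then 1 else 0)))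
        * (if ∀ i, i ∉ S → z i = x i then 1 else 0) := by
    intro z
    rw [hf x z, hg z y, delta_comm x z]
    ring
  simp_rw [step]
  rw [sum_collapse S (fun z => f (fun i => x i.1) (fun i => z i.1)
      * (g (fun i => z i.1) (fun i => y i.1)
        * (if ∀ i, i ∉ T → z i = y i then 1 else 0))) x]
  rw [Finset.sum_eq_single (fun i : S => y i.1)]
  · rw [patch_restrict]
    have hresT : (fun i : T => patch S (fun j : S => y j.1) x i.1) = (fun i : T => x i.1) := by
      funext i
      exact patch_not_mem _ _ (Finset.disjoint_right.mp hd i.2)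
    rw [hresT]
    have hcond : (∀ i, i ∉ T → patch S (fun j : S => y j.1) x i = y i)
        ↔ (∀ i, i ∉ S ∪ T → x i = y i) := by
      constructor
      · intro h i hi
        rw [Finset.mem_union] at hi
        push_neg at hi
        rw [← h i hi.2, patch_not_mem _ _ hi.1]
      · intro h i hi
        by_cases hS : i ∈ S
        · rw [patch_mem _ _ hS]
        · rw [patch_not_mem _ _ hS]
          exact h i (by rw [Finset.mem_union]; tauto)
    rw [if_congr hcond rfl rfl]
    ring
  · intro u _ hu
    have : ¬ (∀ i, i ∉ T → patch S u x i = y i) := by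
      intro h
      apply hu
      funext i
      rw [← patch_mem u x i.2]
      exact h i.1 (Finset.disjoint_left.mp hd i.2)
    rw [if_neg this]
    ring
  · intro h; exact absurd (Finset.mem_univ _) h

lemma commute_of_disjoint {A B : QOp n} {S T : Finset (Fin n)}
    (hA : SupportedOn A S) (hB : SupportedOn B T) (hd : Disjoint S T) :
    A * B = B * A := by
  obtain ⟨f, hf⟩ := hA
  obtain ⟨g, hg⟩ := hB
  ext x y
  rw [mul_entry_disjoint f g hf hg hd x y, mul_entry_disjoint g f hg hf hd.symm x y]
  rw [Finset.union_comm]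
  ring

lemma mul_diag_of_disjoint {A B : QOp n} {S T : Finset (Fin n)}
    (hA : SupportedOn A S) (hB : SupportedOn B T) (hd : Disjoint S T) (x : Fin n → Fin 2) :
    (A * B) x x = A x x * B x x := by
  obtain ⟨f, hf⟩ := hA
  obtain ⟨g, hg⟩ := hB
  rw [mul_entry_disjoint f g hf hg hd x x, hf x x, hg x x]
  simp

/-! ### Lightcones -/

def stepCone (gs : List (Finset (Fin n))) (S : Finset (Fin n)) : Finset (Fin n) :=
  S ∪ (gs.toFinset.filter fun T => ¬ Disjoint T S).biUnion id

lemma subset_stepCone (gs : List (Finset (Fin n))) (S : Finset (Fin n)) :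
    S ⊆ stepCone gs S := Finset.subset_union_left

lemma mem_subset_stepCone {gs : List (Finset (Fin n))} {S T : Finset (Fin n)}
    (hT : T ∈ gs) (hTS : ¬ Disjoint T S) : T ⊆ stepCone gs S := by
  refine Finset.Subset.trans ?_ Finset.subset_union_right
  intro a ha
  rw [Finset.mem_biUnion]
  exact ⟨T, Finset.mem_filter.mpr ⟨List.mem_toFinset.mpr hT, hTS⟩, ha⟩

lemma stepCone_subset_cons {g : Finset (Fin n)} {gs : List (Finset (Fin n))}
    {S : Finset (Fin n)} : stepCone gs S ⊆ stepCone (g :: gs) S := by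
  refine Finset.union_subset_union (le_refl _) (Finset.biUnion_subset_biUnion_of_subset_left _ ?_)
  intro T hT
  rw [Finset.mem_filter] at hT ⊢
  refine ⟨?_, hT.2⟩
  rw [List.mem_toFinset] at hT ⊢
  exact List.mem_cons_of_mem _ hT.1

lemma stepCone_union_subset_cons {g : Finset (Fin n)} {gs : List (Finset (Fin n))}
    {S : Finset (Fin n)} (hg : ¬ Disjoint g S) (hrest : ∀ T ∈ gs, Disjoint T g) :
    stepCone gs (S ∪ g) ⊆ stepCone (g :: gs) S := by
  intro a ha
  rw [stepCone, Finset.mem_union] at ha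
  rcases ha with ha | ha
  · rw [Finset.mem_union] at ha
    rcases ha with ha | ha
    · exact subset_stepCone _ _ ha
    · exact mem_subset_stepCone (List.mem_cons_self) hg ha
  · rw [Finset.mem_biUnion] at ha
    obtain ⟨T, hT, haT⟩ := ha
    rw [Finset.mem_filter, List.mem_toFinset] at hT
    have hTS : ¬ Disjoint T S := by
      intro hd
      apply hT.2
      rw [Finset.disjoint_union_right]
      exact ⟨hd, hrest T hT.1⟩
    exact mem_subset_stepCone (List.mem_cons_of_mem _ hT.1) hTS haT

lemma stepCone_swap {gs : List (Finset (Fin n))} {S R : Finset (Fin n)}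
    (h : ¬ Disjoint (stepCone gs S) R) : ¬ Disjoint S (stepCone gs R) := by
  rw [Finset.not_disjoint_iff] at h ⊢
  obtain ⟨a, haC, haR⟩ := h
  rw [stepCone, Finset.mem_union] at haC
  rcases haC with haS | haB
  · exact ⟨a, haS, subset_stepCone _ _ haR⟩
  · rw [Finset.mem_biUnion] at haB
    obtain ⟨T, hT, haT⟩ := haB
    rw [Finset.mem_filter, List.mem_toFinset] at hT
    obtain ⟨b, hbT, hbS⟩ := Finset.not_disjoint_iff.mp hT.2
    refine ⟨b, hbS, mem_subset_stepCone hT.1 ?_ hbT⟩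
    exact Finset.not_disjoint_iff.mpr ⟨a, haT, haR⟩

lemma stepCone_card {gs : List (Finset (Fin n))} {S : Finset (Fin n)}
    (hcard : ∀ T ∈ gs, T.card ≤ 2) (hdisj : gs.Pairwise Disjoint) :
    (stepCone gs S).card ≤ 3 * S.card := by
  set F := gs.toFinset.filter fun T => ¬ Disjoint T S with hF
  have hFd : ∀ x ∈ F, ∀ y ∈ F, x ≠ y → Disjoint (id x) (id y) := by
    intro x hx y hy hxy
    rw [hF, Finset.mem_filter, List.mem_toFinset] at hx hy
    haveI : Std.Symm (Disjoint : Finset (Fin n) → Finset (Fin n) → Prop) := ⟨fun _ _ h => h.symm⟩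
    exact hdisj.forall hx.1 hy.1 hxy
  have hbU : (F.biUnion id).card = ∑ T ∈ F, T.card := by
    rw [Finset.card_biUnion hFd]; rfl
  have hFcard : F.card ≤ S.card := by
    have h1 : ∀ T ∈ F, 1 ≤ (T ∩ S).card := by
      intro T hT
      rw [hF, Finset.mem_filter] at hT
      obtain ⟨b, hbT, hbS⟩ := Finset.not_disjoint_iff.mp hT.2
      exact Finset.card_pos.mpr ⟨b, Finset.mem_inter.mpr ⟨hbT, hbS⟩⟩
    calc F.card = ∑ _T ∈ F, 1 := by simp
      _ ≤ ∑ T ∈ F, (T ∩ S).card := Finset.sum_le_sum h1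
      _ = (F.biUnion (· ∩ S)).card := (Finset.card_biUnion (fun x hx y hy hxy =>
            (hFd x hx y hy hxy).mono Finset.inter_subset_left Finset.inter_subset_left)).symm
      _ ≤ S.card := Finset.card_le_card (by
            intro a ha
            rw [Finset.mem_biUnion] at ha
            obtain ⟨T, _, haT⟩ := ha
            exact (Finset.mem_inter.mp haT).2)
  have hsum : ∑ T ∈ F, T.card ≤ 2 * F.card := by
    calc ∑ T ∈ F, T.card ≤ ∑ _T ∈ F, 2 := Finset.sum_le_sum (fun T hT =>
          hcard T (List.mem_toFinset.mp (Finset.mem_filter.mp hT).1))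
      _ = 2 * F.card := by rw [Finset.sum_const, smul_eq_mul, mul_comm]
  calc (stepCone gs S).card ≤ S.card + (F.biUnion id).card := Finset.card_union_le _ _
    _ ≤ S.card + 2 * S.card := by
        rw [hbU]; omega
    _ = 3 * S.card := by ring

def cone : List (List (Finset (Fin n))) → Finset (Fin n) → Finset (Fin n)
  | [], S => S
  | gs :: rest, S => cone rest (stepCone gs S)

def rcone : List (List (Finset (Fin n))) → Finset (Fin n) → Finset (Fin n)
  | [], R => R
  | gs :: rest, R => stepCone gs (rcone rest R)

lemma cone_swap : ∀ (Ls : List (List (Finset (Fin n)))) {S R : Finset (Fin n)},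
    ¬ Disjoint (cone Ls S) R → ¬ Disjoint S (rcone Ls R)
  | [], S, R, h => h
  | gs :: rest, S, R, h => stepCone_swap (cone_swap rest h)

lemma cone_card : ∀ (Ls : List (List (Finset (Fin n)))) {S : Finset (Fin n)},
    (∀ gs ∈ Ls, (∀ T ∈ gs, T.card ≤ 2) ∧ gs.Pairwise Disjoint) →
    (cone Ls S).card ≤ 3 ^ Ls.length * S.card
  | [], S, _ => by simp [cone]
  | gs :: rest, S, h => by
    have h1 := h gs (List.mem_cons_self)
    have h2 := cone_card rest (S := stepCone gs S) (fun l hl => h l (List.mem_cons_of_mem _ hl))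
    calc (cone (gs :: rest) S).card ≤ 3 ^ rest.length * (stepCone gs S).card := h2
      _ ≤ 3 ^ rest.length * (3 * S.card) :=
          Nat.mul_le_mul_left _ (stepCone_card h1.1 h1.2)
      _ = 3 ^ (gs :: rest).length * S.card := by
          rw [List.length_cons, pow_succ]; ring

lemma rcone_card : ∀ (Ls : List (List (Finset (Fin n)))) {R : Finset (Fin n)},
    (∀ gs ∈ Ls, (∀ T ∈ gs, T.card ≤ 2) ∧ gs.Pairwise Disjoint) →
    (rcone Ls R).card ≤ 3 ^ Ls.length * R.card
  | [], R, _ => by simp [rcone]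
  | gs :: rest, R, h => by
    have h1 := h gs (List.mem_cons_self)
    have h2 := rcone_card rest (R := R) (fun l hl => h l (List.mem_cons_of_mem _ hl))
    calc (rcone (gs :: rest) R).card ≤ 3 * (rcone rest R).card := stepCone_card h1.1 h1.2
      _ ≤ 3 * (3 ^ rest.length * R.card) := Nat.mul_le_mul_left _ h2
      _ = 3 ^ (gs :: rest).length * R.card := by
          rw [List.length_cons, pow_succ]; ring


/-! ### Conjugation by layers -/

lemma unitary_conj_eq {g A : QOp n} {S T : Finset (Fin n)}
    (hu : g ∈ Matrix.unitaryGroup (Fin n → Fin 2) ℂ) (hg : SupportedOn g T)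
    (hA : SupportedOn A S) (hd : Disjoint S T) : gᴴ * A * g = A := by
  have hcomm : A * g = g * A := commute_of_disjoint hA hg hd
  calc gᴴ * A * g = gᴴ * (A * g) := by rw [Matrix.mul_assoc]
    _ = gᴴ * (g * A) := by rw [hcomm]
    _ = (gᴴ * g) * A := by rw [Matrix.mul_assoc]
    _ = A := by
        rw [← Matrix.star_eq_conjTranspose, Matrix.UnitaryGroup.star_mul_self ⟨g, hu⟩,
          Matrix.one_mul]

lemma layer_conj (L : List (QOp n × Finset (Fin n)))
    (hgood : ∀ g ∈ L, g.1 ∈ Matrix.unitaryGroup (Fin n → Fin 2) ℂ ∧ SupportedOn g.1 g.2)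
    (hpair : L.Pairwise fun g h => Disjoint g.2 h.2)
    {A : QOp n} {S : Finset (Fin n)} (hA : SupportedOn A S) :
    SupportedOn (((L.map Prod.fst).prod)ᴴ * A * (L.map Prod.fst).prod)
      (stepCone (L.map Prod.snd) S) := by
  induction L generalizing A S with
  | nil =>
    simp only [List.map_nil, List.prod_nil, Matrix.conjTranspose_one, Matrix.one_mul,
      Matrix.mul_one]
    exact hA.mono (subset_stepCone _ _)
  | cons g L ih =>
    have hg := hgood g (List.mem_cons_self)
    have hgood' : ∀ h ∈ L, h.1 ∈ Matrix.unitaryGroup (Fin n → Fin 2) ℂ ∧ SupportedOn h.1 h.2 :=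
      fun h hh => hgood h (List.mem_cons_of_mem _ hh)
    have hpair' := (List.pairwise_cons.mp hpair).2
    have hhead := (List.pairwise_cons.mp hpair).1
    have hre : ((((g :: L).map Prod.fst).prod)ᴴ * A * ((g :: L).map Prod.fst).prod)
        = (((L.map Prod.fst).prod)ᴴ * (g.1ᴴ * A * g.1) * (L.map Prod.fst).prod) := by
      simp only [List.map_cons, List.prod_cons, Matrix.conjTranspose_mul, Matrix.mul_assoc]
    rw [hre]
    by_cases hd : Disjoint g.2 S
    · rw [unitary_conj_eq hg.1 hg.2 hA hd.symm]
      exact (ih hgood' hpair' hA).mono stepCone_subset_cons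
    · have hA' : SupportedOn (g.1ᴴ * A * g.1) (S ∪ g.2) := by
        have h1 : SupportedOn (g.1ᴴ) (S ∪ g.2) :=
          (hg.2.conjTranspose).mono Finset.subset_union_right
        have h2 : SupportedOn A (S ∪ g.2) := hA.mono Finset.subset_union_left
        have h3 : SupportedOn g.1 (S ∪ g.2) := hg.2.mono Finset.subset_union_right
        exact (h1.mul h2).mul h3
      refine (ih hgood' hpair' hA').mono ?_
      refine stepCone_union_subset_cons hd ?_
      intro T hT
      rw [List.mem_map] at hT
      obtain ⟨h, hhL, rfl⟩ := hT
      exact (hhead h hhL).symm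

lemma circuit_conj (LL : List (List (QOp n × Finset (Fin n))))
    (hgood : ∀ L ∈ LL,
      (∀ g ∈ L, g.1 ∈ Matrix.unitaryGroup (Fin n → Fin 2) ℂ ∧ SupportedOn g.1 g.2) ∧
      L.Pairwise fun g h => Disjoint g.2 h.2)
    {A : QOp n} {S : Finset (Fin n)} (hA : SupportedOn A S) :
    SupportedOn
      (((LL.map fun L => (L.map Prod.fst).prod).prod)ᴴ * A *
        (LL.map fun L => (L.map Prod.fst).prod).prod)
      (cone (LL.map fun L => L.map Prod.snd) S) := by
  induction LL generalizing A S with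
  | nil =>
    simpa only [List.map_nil, List.prod_nil, Matrix.conjTranspose_one, Matrix.one_mul,
      Matrix.mul_one, cone] using hA
  | cons L LL ih =>
    have hre : ((((L :: LL).map fun L => (L.map Prod.fst).prod).prod)ᴴ * A *
        ((L :: LL).map fun L => (L.map Prod.fst).prod).prod)
        = (((LL.map fun L => (L.map Prod.fst).prod).prod)ᴴ *
            ((((L.map Prod.fst).prod)ᴴ) * A * (L.map Prod.fst).prod) *
            (LL.map fun L => (L.map Prod.fst).prod).prod) := by
      simp only [List.map_cons, List.prod_cons, Matrix.conjTranspose_mul, Matrix.mul_assoc]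
    rw [hre]
    have h1 := hgood L (List.mem_cons_self)
    exact ih (fun L' hL' => hgood L' (List.mem_cons_of_mem _ hL'))
      (layer_conj L h1.1 h1.2 hA)

/-! ### States, expectations -/

def zer (n : ℕ) : Fin n → Fin 2 := fun _ => 0

noncomputable def pdist (U : QOp n) : (Fin n → Fin 2) → ℝ :=
  fun x => Complex.normSq (U x (zer n))

noncomputable def expz (U : QOp n) (d : (Fin n → Fin 2) → ℝ) : ℝ :=
  ∑ x, d x * pdist U x

lemma pdist_nonneg (U : QOp n) (x : Fin n → Fin 2) : 0 ≤ pdist U x :=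
  Complex.normSq_nonneg _

lemma exp_eq_entry (U : QOp n) (d : (Fin n → Fin 2) → ℝ) :
    (Uᴴ * Matrix.diagonal (fun x => ((d x : ℝ) : ℂ)) * U) (zer n) (zer n)
      = ((expz U d : ℝ) : ℂ) := by
  rw [Matrix.mul_apply]
  have step : ∀ y, (Uᴴ * Matrix.diagonal fun x => ((d x : ℝ) : ℂ)) (zer n) y * U y (zer n)
      = ((d y * pdist U y : ℝ) : ℂ) := by
    intro y
    rw [Matrix.mul_diagonal, Matrix.conjTranspose_apply, RCLike.star_def]
    have h : (starRingEnd ℂ) (U y (zer n)) * ((d y : ℝ) : ℂ) * U y (zer n)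
        = ((d y : ℝ) : ℂ) * ((starRingEnd ℂ) (U y (zer n)) * U y (zer n)) := by ring
    rw [h, ← Complex.normSq_eq_conj_mul_self, pdist]
    push_cast
    ring
  simp_rw [step]
  rw [expz]
  push_cast
  rfl

lemma sum_pdist (U : QOp n) (hU : U ∈ Matrix.unitaryGroup (Fin n → Fin 2) ℂ) :
    ∑ x, pdist U x = 1 := by
  have h1 : Uᴴ * U = 1 := by
    rw [← Matrix.star_eq_conjTranspose]
    exact Matrix.UnitaryGroup.star_mul_self ⟨U, hU⟩
  have h2 : (Uᴴ * U) (zer n) (zer n) = ∑ x, ((pdist U x : ℝ) : ℂ) := by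
    rw [Matrix.mul_apply]
    refine Finset.sum_congr rfl fun x _ => ?_
    rw [Matrix.conjTranspose_apply, RCLike.star_def, pdist]
    push_cast
    rw [← Complex.normSq_eq_conj_mul_self]
  rw [h1, Matrix.one_apply_eq] at h2
  have := congrArg Complex.re h2.symm
  rw [Complex.re_sum] at this
  simpa using this

lemma abs_expz_le (U : QOp n) (hU : U ∈ Matrix.unitaryGroup (Fin n → Fin 2) ℂ)
    (d : (Fin n → Fin 2) → ℝ) (hd : ∀ x, |d x| ≤ 1) : |expz U d| ≤ 1 := by
  calc |expz U d| ≤ ∑ x, |d x * pdist U x| := Finset.abs_sum_le_sum_abs _ _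
    _ ≤ ∑ x, pdist U x := by
        refine Finset.sum_le_sum fun x _ => ?_
        rw [abs_mul, abs_of_nonneg (pdist_nonneg U x)]
        exact mul_le_of_le_one_left (pdist_nonneg U x) (hd x)
    _ = 1 := sum_pdist U hU

def zsign {n : ℕ} (i : Fin n) (x : Fin n → Fin 2) : ℝ := if x i = 0 then 1 else -1

lemma abs_zsign (i : Fin n) (x : Fin n → Fin 2) : |zsign i x| ≤ 1 := by
  rw [zsign]; split <;> norm_num

lemma Zmat_eq_diagonal (n : ℕ) (i : Fin n) :
    Zmat n i = Matrix.diagonal (fun x => ((zsign i x : ℝ) : ℂ)) := by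
  ext b c
  rw [Zmat, Matrix.of_apply, Matrix.diagonal_apply, zsign]
  by_cases h : b = c
  · subst h; simp only [if_pos rfl]
    simp [apply_ite (fun r : ℝ => (r : ℂ))]
  · rw [if_neg h, if_neg h]

lemma supportedOn_Zmat (n : ℕ) (i : Fin n) : SupportedOn (Zmat n i) {i} := by
  refine ⟨fun u v => if u = v then (if u ⟨i, Finset.mem_singleton_self i⟩ = 0 then 1 else -1)
    else 0, fun x y => ?_⟩
  rw [Zmat, Matrix.of_apply]
  beta_reduce
  by_cases h : x = y
  · subst h
    rw [if_pos rfl, if_pos rfl, if_pos (fun j _ => rfl), mul_one]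
  · rw [if_neg h]
    by_cases h1 : (fun j : ({i} : Finset (Fin n)) => x j.1) = (fun j : ({i} : Finset (Fin n)) => y j.1)
    · by_cases h2 : ∀ j, j ∉ ({i} : Finset (Fin n)) → x j = y j
      · exfalso
        apply h
        funext j
        by_cases hj : j ∈ ({i} : Finset (Fin n))
        · exact congrFun h1 ⟨j, hj⟩
        · exact h2 j hj
      · rw [if_neg h2, mul_zero]
    · rw [if_neg h1, zero_mul]

lemma cov_zero (U : QOp n) (hU : U ∈ Matrix.unitaryGroup (Fin n → Fin 2) ℂ)
    {i j : Fin n} {S T : Finset (Fin n)}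
    (hAi : SupportedOn (Uᴴ * Zmat n i * U) S) (hAj : SupportedOn (Uᴴ * Zmat n j * U) T)
    (hd : Disjoint S T) :
    expz U (fun x => zsign i x * zsign j x) = expz U (zsign i) * expz U (zsign j) := by
  have hUU : U * Uᴴ = 1 := by
    rw [← Matrix.star_eq_conjTranspose]
    exact (Unitary.mem_iff.mp hU).2
  have hdiag : Matrix.diagonal (fun x => (((fun x => zsign i x * zsign j x) x : ℝ) : ℂ))
      = Zmat n i * Zmat n j := by
    rw [Zmat_eq_diagonal, Zmat_eq_diagonal, Matrix.diagonal_mul_diagonal]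
    congr 1
    funext x
    push_cast
    ring
  have hsplit : Uᴴ * (Zmat n i * Zmat n j) * U
      = (Uᴴ * Zmat n i * U) * (Uᴴ * Zmat n j * U) := by
    calc Uᴴ * (Zmat n i * Zmat n j) * U
        = Uᴴ * Zmat n i * (U * Uᴴ) * Zmat n j * U := by
          rw [hUU, Matrix.mul_one]
          simp only [Matrix.mul_assoc]
      _ = (Uᴴ * Zmat n i * U) * (Uᴴ * Zmat n j * U) := by
          simp only [Matrix.mul_assoc]
  have h1 := exp_eq_entry U (fun x => zsign i x * zsign j x)
  rw [hdiag, hsplit] at h1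
  rw [mul_diag_of_disjoint hAi hAj hd] at h1
  have h2 : (Uᴴ * Zmat n i * U) (zer n) (zer n) = ((expz U (zsign i) : ℝ) : ℂ) := by
    rw [Zmat_eq_diagonal]; exact exp_eq_entry U (zsign i)
  have h3 : (Uᴴ * Zmat n j * U) (zer n) (zer n) = ((expz U (zsign j) : ℝ) : ℂ) := by
    rw [Zmat_eq_diagonal]; exact exp_eq_entry U (zsign j)
  rw [h2, h3] at h1
  have h4 := h1.symm
  rw [← Complex.ofReal_mul] at h4
  exact_mod_cast h4

/-! ### Circuit structure extraction -/

lemma hasDepth_struct {n k : ℕ} {U : QOp n} (hU : HasDepth U k) :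
    ∃ LL : List (List (QOp n × Finset (Fin n))),
      LL.length = k ∧
      U = (LL.map fun L => (L.map Prod.fst).prod).prod ∧
      ∀ L ∈ LL, (∀ g ∈ L, g.1 ∈ Matrix.unitaryGroup (Fin n → Fin 2) ℂ ∧
        SupportedOn g.1 g.2 ∧ g.2.card ≤ 2) ∧ (L.Pairwise fun g h => Disjoint g.2 h.2) := by
  obtain ⟨layers, hprod, hlayer⟩ := hU
  choose gates hgates using hlayer
  refine ⟨List.ofFn gates, by simp, ?_, ?_⟩
  · rw [hprod, List.map_ofFn]
    exact congrArg List.prod (congrArg List.ofFn (funext fun j => (hgates j).1))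
  · intro L hL
    rw [List.mem_ofFn] at hL
    obtain ⟨j, rfl⟩ := hL
    exact ⟨(hgates j).2.1, (hgates j).2.2⟩

lemma hasDepth_unitary {n k : ℕ} {U : QOp n} (hU : HasDepth U k) :
    U ∈ Matrix.unitaryGroup (Fin n → Fin 2) ℂ := by
  obtain ⟨LL, _, hprod, hgood⟩ := hasDepth_struct hU
  rw [hprod]
  refine Submonoid.list_prod_mem _ ?_
  intro x hx
  rw [List.mem_map] at hx
  obtain ⟨L, hL, rfl⟩ := hx
  refine Submonoid.list_prod_mem _ ?_
  intro g hg
  rw [List.mem_map] at hg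
  obtain ⟨g', hg', rfl⟩ := hg
  exact ((hgood L hL).1 g' hg').1

/-! ### The variance bound -/

lemma variance_bound {k n : ℕ} (hn : 0 < n) (U : QOp n) (hU : HasDepth U k) :
    ∑ x, (((n:ℝ)⁻¹ * ∑ i, zsign i x)
        - expz U (fun x => (n:ℝ)⁻¹ * ∑ i, zsign i x))^2 * pdist U x
      ≤ 2 * 9 ^ k / n := by
  obtain ⟨LL, hlen, hprod, hgood⟩ := hasDepth_struct hU
  have hUuni : U ∈ Matrix.unitaryGroup (Fin n → Fin 2) ℂ := hasDepth_unitary hU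
  set Ls : List (List (Finset (Fin n))) := LL.map (fun L => L.map Prod.snd) with hLs
  have hLslen : Ls.length = k := by rw [hLs, List.length_map, hlen]
  set Lc : Fin n → Finset (Fin n) := fun i => cone Ls {i} with hLc
  have hsup : ∀ i, SupportedOn (Uᴴ * Zmat n i * U) (Lc i) := by
    intro i
    rw [hprod]
    exact circuit_conj LL (fun L hL => ⟨fun g hg => ⟨((hgood L hL).1 g hg).1,
      ((hgood L hL).1 g hg).2.1⟩, (hgood L hL).2⟩) (supportedOn_Zmat n i)
  have hcards : ∀ gs ∈ Ls, (∀ T ∈ gs, T.card ≤ 2) ∧ gs.Pairwise Disjoint := by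
    intro gs hgs
    rw [hLs, List.mem_map] at hgs
    obtain ⟨L, hL, rfl⟩ := hgs
    constructor
    · intro T hT
      rw [List.mem_map] at hT
      obtain ⟨g, hg, rfl⟩ := hT
      exact ((hgood L hL).1 g hg).2.2
    · exact List.Pairwise.map _ (fun a b h => h) (hgood L hL).2
  have hLccard : ∀ i, (Lc i).card ≤ 3 ^ k := by
    intro i
    have := cone_card Ls (S := {i}) hcards
    rwa [hLslen, Finset.card_singleton, mul_one] at this
  set B : Finset (Fin n × Fin n) :=
    Finset.univ.filter (fun q => ¬ Disjoint (Lc q.1) (Lc q.2)) with hB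
  have hBsub : B ⊆ Finset.univ.biUnion
      (fun j : Fin n => (rcone Ls (Lc j)) ×ˢ ({j} : Finset (Fin n))) := by
    intro q hq
    rw [hB, Finset.mem_filter] at hq
    rw [Finset.mem_biUnion]
    refine ⟨q.2, Finset.mem_univ _, ?_⟩
    rw [Finset.mem_product, Finset.mem_singleton]
    refine ⟨?_, rfl⟩
    have h1 : ¬ Disjoint ({q.1} : Finset (Fin n)) (rcone Ls (Lc q.2)) :=
      cone_swap Ls hq.2
    rw [Finset.disjoint_singleton_left] at h1
    exact not_not.mp h1
  have hBcard : B.card ≤ 9 ^ k * n := by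
    calc B.card ≤ (Finset.univ.biUnion
        (fun j : Fin n => (rcone Ls (Lc j)) ×ˢ ({j} : Finset (Fin n)))).card :=
          Finset.card_le_card hBsub
      _ ≤ ∑ j, ((rcone Ls (Lc j)) ×ˢ ({j} : Finset (Fin n))).card :=
          Finset.card_biUnion_le
      _ ≤ ∑ _j : Fin n, 9 ^ k := by
          refine Finset.sum_le_sum fun j _ => ?_
          rw [Finset.card_product, Finset.card_singleton, mul_one]
          calc (rcone Ls (Lc j)).card ≤ 3 ^ Ls.length * (Lc j).card := rcone_card Ls hcards
            _ ≤ 3 ^ k * 3 ^ k := by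
                rw [hLslen]
                exact Nat.mul_le_mul_left _ (hLccard j)
            _ = 9 ^ k := by rw [← mul_pow]; norm_num
      _ = 9 ^ k * n := by rw [Finset.sum_const, Finset.card_univ, Fintype.card_fin,
            smul_eq_mul, mul_comm]
  have hcov : ∀ i j : Fin n, (i, j) ∉ B →
      expz U (fun x => zsign i x * zsign j x) = expz U (zsign i) * expz U (zsign j) := by
    intro i j hij
    rw [hB, Finset.mem_filter] at hij
    push_neg at hij
    exact cov_zero U hUuni (hsup i) (hsup j) (hij (Finset.mem_univ _))
  -- now the scalar computation
  set p : (Fin n → Fin 2) → ℝ := pdist U with hp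
  have hp0 : ∀ x, 0 ≤ p x := pdist_nonneg U
  have hp1 : ∑ x, p x = 1 := sum_pdist U hUuni
  set o : (Fin n → Fin 2) → ℝ := fun x => (n:ℝ)⁻¹ * ∑ i, zsign i x with ho
  set a : ℝ := expz U o with haE
  have ha : a = (n:ℝ)⁻¹ * ∑ i, expz U (zsign i) := by
    rw [haE, expz]
    have h1 : ∀ x, o x * pdist U x = (n:ℝ)⁻¹ * ∑ i, zsign i x * p x := by
      intro x
      rw [ho, mul_assoc, Finset.sum_mul]
    simp_rw [h1]
    rw [← Finset.mul_sum, Finset.sum_comm]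
    rfl
  have hexp2 : ∀ (f g : Fin n → ℝ) (c : ℝ),
      (∑ i, f i) * (∑ j, g j) * c = ∑ i, ∑ j, f i * g j * c := by
    intro f g c
    rw [Finset.sum_mul_sum, Finset.sum_mul]
    simp_rw [Finset.sum_mul]
  have hsq : ∑ x, (o x)^2 * p x
      = ((n:ℝ)⁻¹)^2 * ∑ i, ∑ j, expz U (fun x => zsign i x * zsign j x) := by
    have hzz : ∀ x, (o x)^2 * p x
        = ((n:ℝ)⁻¹)^2 * ∑ i, ∑ j, zsign i x * zsign j x * p x := by
      intro x
      rw [← hexp2]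
      rw [ho]
      ring
    simp_rw [hzz]
    rw [← Finset.mul_sum]
    congr 1
    rw [Finset.sum_comm]
    refine Finset.sum_congr rfl fun i _ => ?_
    rw [Finset.sum_comm]
    rfl
  have hVar : ∑ x, (o x - a)^2 * p x
      = ((n:ℝ)⁻¹)^2 * ∑ i, ∑ j,
        (expz U (fun x => zsign i x * zsign j x) - expz U (zsign i) * expz U (zsign j)) := by
    have h1 : ∀ x, (o x - a)^2 * p x
        = (o x)^2 * p x - 2*a*(o x * p x) + a^2 * p x := by intro x; ring
    simp_rw [h1]
    rw [Finset.sum_add_distrib, Finset.sum_sub_distrib, ← Finset.mul_sum, ← Finset.mul_sum]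
    have h2 : ∑ x, o x * p x = a := rfl
    rw [h2, hp1, hsq, mul_one]
    have h3 : ∑ i, ∑ j, (expz U (fun x => zsign i x * zsign j x)
        - expz U (zsign i) * expz U (zsign j))
        = (∑ i, ∑ j, expz U (fun x => zsign i x * zsign j x))
          - (∑ i, expz U (zsign i))^2 := by
      rw [pow_two, Finset.sum_mul_sum]
      rw [← Finset.sum_sub_distrib]
      refine Finset.sum_congr rfl fun i _ => ?_
      rw [← Finset.sum_sub_distrib]
    rw [h3, mul_sub, ha]
    ring
  have hCov : ∑ i, ∑ j, (expz U (fun x => zsign i x * zsign j x)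
      - expz U (zsign i) * expz U (zsign j)) ≤ 2 * ((9:ℝ)^k * (n:ℝ)) := by
    have habs : ∀ i j : Fin n, expz U (fun x => zsign i x * zsign j x)
        - expz U (zsign i) * expz U (zsign j) ≤ if (i, j) ∈ B then 2 else 0 := by
      intro i j
      by_cases hij : (i, j) ∈ B
      · rw [if_pos hij]
        have e1 : |expz U (fun x => zsign i x * zsign j x)| ≤ 1 :=
          abs_expz_le U hUuni _ (fun x => by
            rw [abs_mul]
            exact mul_le_one₀ (abs_zsign i x) (abs_nonneg _) (abs_zsign j x))
        have e2 : |expz U (zsign i) * expz U (zsign j)| ≤ 1 := by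
          rw [abs_mul]
          exact mul_le_one₀ (abs_expz_le U hUuni _ (abs_zsign i))
            (abs_nonneg _) (abs_expz_le U hUuni _ (abs_zsign j))
        calc expz U (fun x => zsign i x * zsign j x) - expz U (zsign i) * expz U (zsign j)
            ≤ |expz U (fun x => zsign i x * zsign j x)| + |expz U (zsign i) * expz U (zsign j)| := by
              have := abs_sub_abs_le_abs_sub (expz U (fun x => zsign i x * zsign j x))
                (expz U (zsign i) * expz U (zsign j))
              have h5 := le_abs_self (expz U (fun x => zsign i x * zsign j x)
                - expz U (zsign i) * expz U (zsign j))
              have h6 := abs_sub (expz U (fun x => zsign i x * zsign j x))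
                (expz U (zsign i) * expz U (zsign j))
              linarith
          _ ≤ 2 := by linarith
      · rw [if_neg hij, hcov i j hij, sub_self]
    calc ∑ i, ∑ j, (expz U (fun x => zsign i x * zsign j x)
          - expz U (zsign i) * expz U (zsign j))
        ≤ ∑ i, ∑ j : Fin n, (if (i, j) ∈ B then (2:ℝ) else 0) :=
          Finset.sum_le_sum (fun i _ => Finset.sum_le_sum (fun j _ => habs i j))
      _ = ∑ q ∈ Finset.univ ×ˢ Finset.univ, (if q ∈ B then (2:ℝ) else 0) := by
          rw [Finset.sum_product]
      _ = ∑ q ∈ B, (2:ℝ) := by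
          rw [Finset.univ_product_univ, Finset.sum_ite_mem, Finset.univ_inter]
      _ = 2 * B.card := by rw [Finset.sum_const]; push_cast; ring
      _ ≤ 2 * ((9:ℝ)^k * (n:ℝ)) := by
          have : (B.card : ℝ) ≤ ((9^k * n : ℕ) : ℝ) := by exact_mod_cast hBcard
          push_cast at this
          linarith
  rw [hVar]
  have hn' : (0:ℝ) < n := by exact_mod_cast hn
  calc ((n:ℝ)⁻¹)^2 * ∑ i, ∑ j, (expz U (fun x => zsign i x * zsign j x)
        - expz U (zsign i) * expz U (zsign j))
      ≤ ((n:ℝ)⁻¹)^2 * (2 * ((9:ℝ)^k * (n:ℝ))) := by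
        refine mul_le_mul_of_nonneg_left hCov ?_
        positivity
    _ = 2 * (9:ℝ) ^ k / (n:ℝ) := by
        field_simp

/-! ### Chebyshev-based discrimination -/

lemma core {k n : ℕ} (hn : 0 < n) (U V : QOp n) (hU : HasDepth U k) (hV : HasDepth V k)
    {ε : ℝ} (hε : 0 < ε)
    (hgap : ε < expz U (fun x => (n:ℝ)⁻¹ * ∑ i, zsign i x)
      - expz V (fun x => (n:ℝ)⁻¹ * ∑ i, zsign i x)) :
    ∃ s : (Fin n → Fin 2) → ℝ, (∀ x, |s x| ≤ 1) ∧
      2 * (1 - 16 * (9:ℝ)^k / (n * ε^2)) ≤ ∑ x, s x * (pdist U x - pdist V x) := by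
  set o : (Fin n → Fin 2) → ℝ := fun x => (n:ℝ)⁻¹ * ∑ i, zsign i x with ho
  set a : ℝ := expz U o with haE
  set b : ℝ := expz V o with hbE
  set m : ℝ := (a + b)/2 with hm
  set s : (Fin n → Fin 2) → ℝ := fun x => if m ≤ o x then (1:ℝ) else -1 with hsdef
  have hs : ∀ x, |s x| ≤ 1 := by
    intro x
    rw [hsdef]
    beta_reduce
    split <;> norm_num
  have hc : ε/2 < a - m := by rw [hm]; linarith
  have hc' : ε/2 < m - b := by rw [hm]; linarith
  have hampos : (0:ℝ) < a - m := lt_trans (half_pos hε) hc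
  have hbmpos : (0:ℝ) < m - b := lt_trans (half_pos hε) hc'
  have hVU := variance_bound hn U hU
  have hVV := variance_bound hn V hV
  have hn' : (0:ℝ) < n := by exact_mod_cast hn
  have hpU1 : ∑ x, pdist U x = 1 := sum_pdist U (hasDepth_unitary hU)
  have hpV1 : ∑ x, pdist V x = 1 := sum_pdist V (hasDepth_unitary hV)
  -- pointwise Chebyshev, U side
  have pointU : ∀ x, (1 - s x) * pdist U x
      ≤ (o x - a)^2 * pdist U x * (2/(a-m)^2) := by
    intro x
    by_cases hx : m ≤ o x
    · rw [hsdef]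
      beta_reduce
      rw [if_pos hx, sub_self, zero_mul]
      exact mul_nonneg (mul_nonneg (sq_nonneg _) (pdist_nonneg U x)) (by positivity)
    · rw [hsdef]
      beta_reduce
      rw [if_neg hx]
      push_neg at hx
      have h1 : (a - m)^2 ≤ (o x - a)^2 := by
        have h2 : a - m ≤ a - o x := by linarith
        have h3 := pow_le_pow_left₀ (le_of_lt hampos) h2 2
        calc (a-m)^2 ≤ (a - o x)^2 := h3
          _ = (o x - a)^2 := by ring
      have h4 := mul_le_mul_of_nonneg_right h1 (pdist_nonneg U x)
      calc (1 - (-1)) * pdist U x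
          = ((a-m)^2 * pdist U x) * (2/(a-m)^2) := by
            field_simp
            ring
        _ ≤ ((o x - a)^2 * pdist U x) * (2/(a-m)^2) :=
            mul_le_mul_of_nonneg_right h4 (by positivity)
  have pointV : ∀ x, (1 + s x) * pdist V x
      ≤ (o x - b)^2 * pdist V x * (2/(m-b)^2) := by
    intro x
    by_cases hx : m ≤ o x
    · rw [hsdef]
      beta_reduce
      rw [if_pos hx]
      have h1 : (m - b)^2 ≤ (o x - b)^2 := by
        have h2 : m - b ≤ o x - b := by linarith
        exact pow_le_pow_left₀ (le_of_lt hbmpos) h2 2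
      have h4 := mul_le_mul_of_nonneg_right h1 (pdist_nonneg V x)
      calc (1 + 1) * pdist V x
          = ((m-b)^2 * pdist V x) * (2/(m-b)^2) := by
            field_simp
            ring
        _ ≤ ((o x - b)^2 * pdist V x) * (2/(m-b)^2) :=
            mul_le_mul_of_nonneg_right h4 (by positivity)
    · rw [hsdef]
      beta_reduce
      rw [if_neg hx]
      rw [add_neg_cancel, zero_mul]
      exact mul_nonneg (mul_nonneg (sq_nonneg _) (pdist_nonneg V x)) (by positivity)
  -- summed bounds
  have hb1 : 2/(a-m)^2 ≤ 8/ε^2 := by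
    rw [div_le_div_iff₀ (by positivity) (by positivity)]
    nlinarith [hc, half_pos hε]
  have hb2 : 2/(m-b)^2 ≤ 8/ε^2 := by
    rw [div_le_div_iff₀ (by positivity) (by positivity)]
    nlinarith [hc', half_pos hε]
  have hD : (16:ℝ) * 9^k / (n * ε^2) = (2 * 9^k / n) * (8 / ε^2) := by
    field_simp
    ring
  have hVpos : (0:ℝ) ≤ 2 * 9^k / n := by positivity
  have hVarnonnegU : (0:ℝ) ≤ ∑ x, (o x - a)^2 * pdist U x :=
    Finset.sum_nonneg fun x _ => mul_nonneg (sq_nonneg _) (pdist_nonneg U x)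
  have hVarnonnegV : (0:ℝ) ≤ ∑ x, (o x - b)^2 * pdist V x :=
    Finset.sum_nonneg fun x _ => mul_nonneg (sq_nonneg _) (pdist_nonneg V x)
  have sumU : 1 - ∑ x, s x * pdist U x ≤ 16 * 9^k / (n * ε^2) := by
    have e1 : ∑ x, (1 - s x) * pdist U x = 1 - ∑ x, s x * pdist U x := by
      have : ∀ x, (1 - s x) * pdist U x = pdist U x - s x * pdist U x := by
        intro x; ring
      simp_rw [this]
      rw [Finset.sum_sub_distrib, hpU1]
    have e2 : ∑ x, (o x - a)^2 * pdist U x * (2/(a-m)^2)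
        = (∑ x, (o x - a)^2 * pdist U x) * (2/(a-m)^2) := by
      rw [← Finset.sum_mul]
    calc 1 - ∑ x, s x * pdist U x
        = ∑ x, (1 - s x) * pdist U x := e1.symm
      _ ≤ ∑ x, (o x - a)^2 * pdist U x * (2/(a-m)^2) :=
          Finset.sum_le_sum fun x _ => pointU x
      _ = (∑ x, (o x - a)^2 * pdist U x) * (2/(a-m)^2) := e2
      _ ≤ (2 * 9^k / n) * (8 / ε^2) := by
          refine mul_le_mul hVU hb1 (by positivity) hVpos
      _ = 16 * 9^k / (n * ε^2) := hD.symm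
  have sumV : 1 + ∑ x, s x * pdist V x ≤ 16 * 9^k / (n * ε^2) := by
    have e1 : ∑ x, (1 + s x) * pdist V x = 1 + ∑ x, s x * pdist V x := by
      have : ∀ x, (1 + s x) * pdist V x = pdist V x + s x * pdist V x := by
        intro x; ring
      simp_rw [this]
      rw [Finset.sum_add_distrib, hpV1]
    have e2 : ∑ x, (o x - b)^2 * pdist V x * (2/(m-b)^2)
        = (∑ x, (o x - b)^2 * pdist V x) * (2/(m-b)^2) := by
      rw [← Finset.sum_mul]
    calc 1 + ∑ x, s x * pdist V x
        = ∑ x, (1 + s x) * pdist V x := e1.symm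
      _ ≤ ∑ x, (o x - b)^2 * pdist V x * (2/(m-b)^2) :=
          Finset.sum_le_sum fun x _ => pointV x
      _ = (∑ x, (o x - b)^2 * pdist V x) * (2/(m-b)^2) := e2
      _ ≤ (2 * 9^k / n) * (8 / ε^2) := by
          refine mul_le_mul hVV hb2 (by positivity) hVpos
      _ = 16 * 9^k / (n * ε^2) := hD.symm
  refine ⟨s, hs, ?_⟩
  have e3 : ∑ x, s x * (pdist U x - pdist V x)
      = (∑ x, s x * pdist U x) - ∑ x, s x * pdist V x := by
    have : ∀ x, s x * (pdist U x - pdist V x)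
        = s x * pdist U x - s x * pdist V x := by intro x; ring
    simp_rw [this]
    rw [Finset.sum_sub_distrib]
  rw [e3]
  linarith

/-! ### Bridges to the statement's matrix expressions -/

lemma mulVec_e0 (U : QOp n) (x : Fin n → Fin 2) :
    U.mulVec (fun b => if b = (fun _ => 0) then 1 else 0) x = U x (zer n) := by
  rw [Matrix.mulVec, dotProduct]
  rw [Finset.sum_eq_single (zer n)]
  · rw [if_pos (show (zer n) = (fun _ : Fin n => (0 : Fin 2)) from rfl), mul_one]
  · intro y _ hy
    rw [if_neg (show ¬ (y = fun _ : Fin n => (0:Fin 2)) from hy), mul_zero]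
  · intro h; exact absurd (Finset.mem_univ _) h

lemma outer_herm (v : (Fin n → Fin 2) → ℂ) :
    (Matrix.of fun b c => v b * (starRingEnd ℂ) (v c)).IsHermitian := by
  rw [Matrix.IsHermitian]
  ext b c
  rw [Matrix.conjTranspose_apply, Matrix.of_apply, Matrix.of_apply, RCLike.star_def, map_mul,
    Complex.conj_conj]
  ring

lemma rho_diag (U : QOp n) (x : Fin n → Fin 2) :
    (Matrix.of fun b c => U.mulVec (fun b => if b = (fun _ => 0) then 1 else 0) b
        * (starRingEnd ℂ) (U.mulVec (fun b => if b = (fun _ => 0) then 1 else 0) c)) x x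
      = ((pdist U x : ℝ) : ℂ) := by
  rw [Matrix.of_apply, mulVec_e0, pdist, Complex.mul_conj]

lemma diagsum (n : ℕ) : (∑ i, Zmat n i)
    = Matrix.diagonal (fun x => ((∑ i, zsign i x : ℝ) : ℂ)) := by
  ext b c
  rw [Matrix.sum_apply]
  by_cases h : b = c
  · subst h
    rw [Matrix.diagonal_apply_eq]
    push_cast
    refine Finset.sum_congr rfl fun i _ => ?_
    rw [Zmat_eq_diagonal, Matrix.diagonal_apply_eq]
  · rw [Matrix.diagonal_apply_ne _ h]
    refine Finset.sum_eq_zero fun i _ => ?_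
    rw [Zmat_eq_diagonal, Matrix.diagonal_apply_ne _ h]

lemma trace_formula (U : QOp n) :
    ((((n:ℂ)⁻¹ • ∑ i, Zmat n i) *
      (Matrix.of fun b c => U.mulVec (fun b => if b = (fun _ => 0) then 1 else 0) b
        * (starRingEnd ℂ) (U.mulVec (fun b => if b = (fun _ => 0) then 1 else 0) c))).trace).re
      = expz U (fun x => (n:ℝ)⁻¹ * ∑ i, zsign i x) := by
  rw [diagsum, Matrix.smul_mul, Matrix.trace_smul, Matrix.trace]
  have hdiag : ∀ x, (Matrix.diagonal (fun x => ((∑ i, zsign i x : ℝ) : ℂ)) *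
      (Matrix.of fun b c => U.mulVec (fun b => if b = (fun _ => 0) then 1 else 0) b
        * (starRingEnd ℂ) (U.mulVec (fun b => if b = (fun _ => 0) then 1 else 0) c))).diag x
      = (((∑ i, zsign i x) * pdist U x : ℝ) : ℂ) := by
    intro x
    rw [Matrix.diag_apply, Matrix.diagonal_mul, rho_diag]
    push_cast
    ring
  simp_rw [hdiag]
  rw [← Complex.ofReal_sum]
  have hsm : ((n:ℂ))⁻¹ • ((∑ x, (∑ i, zsign i x) * pdist U x : ℝ) : ℂ)
      = ((((n:ℝ))⁻¹ * ∑ x, (∑ i, zsign i x) * pdist U x : ℝ) : ℂ) := by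
    rw [smul_eq_mul]
    push_cast
    ring
  rw [hsm, Complex.ofReal_re, expz]
  have : ∀ x, (fun x => (n:ℝ)⁻¹ * ∑ i, zsign i x) x * pdist U x
      = (n:ℝ)⁻¹ * ((∑ i, zsign i x) * pdist U x) := by
    intro x; ring
  simp_rw [this]
  rw [← Finset.mul_sum]

end Aux


/-- Constant-depth lower bound on trace distance: for `ρ = U|0ⁿ⟩⟨0ⁿ|Uᴴ`,
`σ = V|0ⁿ⟩⟨0ⁿ|Vᴴ` with `U, V` of depth at most `k` and `O = (1/n) ∑ᵢ Zᵢ`, if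
`|tr(Oρ) - tr(Oσ)| > ε` then `½‖ρ - σ‖₁ ≥ 1 - C_k/(n ε²)` for a constant `C_k`
depending only on `k`. -/
theorem stmt15 : ∃ C : ℕ → ℝ, ∀ (k n : ℕ), 0 < n →
    ∀ U V : QOp n, HasDepth U k → HasDepth V k →
    ∀ ε : ℝ, 0 < ε →
    let ψ : (Fin n → Fin 2) → ℂ :=
      U.mulVec (fun b => if b = (fun _ => 0) then 1 else 0)
    let φ : (Fin n → Fin 2) → ℂ :=
      V.mulVec (fun b => if b = (fun _ => 0) then 1 else 0)
    let ρ : QOp n := Matrix.of fun b c => ψ b * (starRingEnd ℂ) (ψ c)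
    let σ : QOp n := Matrix.of fun b c => φ b * (starRingEnd ℂ) (φ c)
    let O : QOp n := (n : ℂ)⁻¹ • ∑ i, Zmat n i
    ε < |((O * ρ).trace).re - ((O * σ).trace).re| →
    1 - C k / (n * ε ^ 2) ≤ traceNorm (ρ - σ) / 2 := by
  refine ⟨fun k => 16 * (9:ℝ)^k, ?_⟩
  intro k n hn U V hU hV ε hε
  intro ψ φ ρ σ O hgap
  have hn' : (0:ℝ) < n := by exact_mod_cast hn
  have hρσherm : (ρ - σ).IsHermitian := (Aux.outer_herm _).sub (Aux.outer_herm _)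
  have hdiagdiff : ∀ x, ((ρ - σ) x x).re = Aux.pdist U x - Aux.pdist V x := by
    intro x
    rw [Matrix.sub_apply]
    rw [show ρ x x = ((Aux.pdist U x : ℝ) : ℂ) from Aux.rho_diag U x,
        show σ x x = ((Aux.pdist V x : ℝ) : ℂ) from Aux.rho_diag V x]
    rw [← Complex.ofReal_sub, Complex.ofReal_re]
  have htrU : ((O * ρ).trace).re
      = Aux.expz U (fun x => (n:ℝ)⁻¹ * ∑ i, Aux.zsign i x) := Aux.trace_formula U
  have htrV : ((O * σ).trace).re
      = Aux.expz V (fun x => (n:ℝ)⁻¹ * ∑ i, Aux.zsign i x) := Aux.trace_formula V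
  rw [htrU, htrV] at hgap
  rcases lt_abs.mp hgap with h | h
  · obtain ⟨s, hs, hsum⟩ := Aux.core hn U V hU hV hε h
    have hub := sum_mul_diag_le_traceNorm hρσherm s hs
    have hmain : ∑ x, s x * ((ρ - σ) x x).re
        = ∑ x, s x * (Aux.pdist U x - Aux.pdist V x) := by
      refine Finset.sum_congr rfl fun x _ => ?_
      rw [hdiagdiff]
    rw [hmain] at hub
    have hchain := le_trans hsum hub
    rw [show ((fun k => 16 * (9:ℝ)^k) k) = 16 * (9:ℝ)^k from rfl]
    linarith
  · have h' : ε < Aux.expz V (fun x => (n:ℝ)⁻¹ * ∑ i, Aux.zsign i x)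
        - Aux.expz U (fun x => (n:ℝ)⁻¹ * ∑ i, Aux.zsign i x) := by linarith
    obtain ⟨s, hs, hsum⟩ := Aux.core hn V U hV hU hε h'
    have hs' : ∀ x, |(fun x => -(s x)) x| ≤ 1 := by
      intro x
      rw [abs_neg]
      exact hs x
    have hub := sum_mul_diag_le_traceNorm hρσherm (fun x => -(s x)) hs'
    have hmain : ∑ x, (fun x => -(s x)) x * ((ρ - σ) x x).re
        = ∑ x, s x * (Aux.pdist V x - Aux.pdist U x) := by
      refine Finset.sum_congr rfl fun x _ => ?_
      rw [hdiagdiff]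
      ring
    rw [hmain] at hub
    have hchain := le_trans hsum hub
    rw [show ((fun k => 16 * (9:ℝ)^k) k) = 16 * (9:ℝ)^k from rfl]
    linarith
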